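/- Let N ≥ 2 be an integer and let a₁ > a₂ > a₃ > ⋯ be a strictly decreasing sequence of positive real numbers such that Σ_{k=1}^∞ a_k converges. Then Σ_{k=1}^∞ a_k · sin(πk/N) > 0. -/

import Mathlib

set_option maxHeartbeats 1000000


open scoped BigOperators
open Real

/-- Grouping argument at the end of the proof of Theorem 4.2: if `N ≥ 2` and
`a₁ > a₂ > ⋯ > 0` is a strictly decreasing summable sequence of positive reals
(here `a k` stands for `a_{k+1}`), then `Σ_{k≥1} a_k·sin(πk/N) > 0`. -/
theorem stmt6 (N : ℕ) (hN : 2 ≤ N) (a : ℕ → ℝ)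
    (hpos : ∀ k, 0 < a k) (hanti : StrictAnti a) (hsum : Summable a) :
    0 < ∑' k : ℕ, a k * Real.sin (Real.pi * ((k : ℝ) + 1) / (N : ℝ)) := by
  have hN0 : (N : ℝ) ≠ 0 := by positivity
  set f : ℕ → ℝ := fun k => a k * Real.sin (Real.pi * ((k : ℝ) + 1) / (N : ℝ)) with hfdef
  have hf : Summable f := by
    refine Summable.of_norm_bounded hsum fun k => ?_
    have h1 : |Real.sin (Real.pi * ((k : ℝ) + 1) / (N : ℝ))| ≤ 1 := Real.abs_sin_le_one _
    have h2 : |a k| = a k := abs_of_pos (hpos k)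
    calc ‖f k‖ = |a k| * |Real.sin (Real.pi * ((k : ℝ) + 1) / (N : ℝ))| := abs_mul _ _
      _ ≤ |a k| * 1 := by gcongr
      _ = a k := by rw [mul_one, h2]
  haveI : NeZero (2 * N) := ⟨by omega⟩
  set e : ℕ × Fin (2 * N) ≃ ℕ := (Nat.divModEquiv (2 * N)).symm with hedef
  have hfe : Summable (fun p : ℕ × Fin (2 * N) => f (e p)) := e.summable_iff.mpr hf
  -- sine computations
  have sin1 : ∀ j r : ℕ, Real.sin (Real.pi * (((j * (2 * N) + r : ℕ) : ℝ) + 1) / N)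
      = Real.sin (Real.pi * ((r : ℝ) + 1) / N) := by
    intro j r
    have h : Real.pi * (((j * (2 * N) + r : ℕ) : ℝ) + 1) / N
        = Real.pi * ((r : ℝ) + 1) / N + (j : ℕ) * (2 * Real.pi) := by
      push_cast; field_simp; ring
    rw [h, Real.sin_add_nat_mul_two_pi]
  have sin2 : ∀ j r : ℕ, Real.sin (Real.pi * (((j * (2 * N) + (N + r) : ℕ) : ℝ) + 1) / N)
      = -Real.sin (Real.pi * ((r : ℝ) + 1) / N) := by
    intro j r
    have h : Real.pi * (((j * (2 * N) + (N + r) : ℕ) : ℝ) + 1) / N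
        = (Real.pi * ((r : ℝ) + 1) / N + Real.pi) + (j : ℕ) * (2 * Real.pi) := by
      push_cast; field_simp; ring
    rw [h, Real.sin_add_nat_mul_two_pi, Real.sin_add_pi]
  -- the grouped sums
  set S : ℕ → ℝ := fun j => ∑ r ∈ Finset.range N,
      (a (j * (2 * N) + r) - a (j * (2 * N) + (N + r))) * Real.sin (Real.pi * ((r : ℝ) + 1) / N)
    with hSdef
  have key : ∀ j : ℕ, (∑ r : Fin (2 * N), f (e (j, r))) = S j := by
    intro j
    have h1 : (∑ r : Fin (2 * N), f (e (j, r)))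
        = ∑ r ∈ Finset.range (2 * N), f (j * (2 * N) + r) := by
      rw [← Fin.sum_univ_eq_sum_range]
      rfl
    rw [h1]
    have h2 : 2 * N = N + N := by omega
    rw [h2, Finset.sum_range_add, ← Finset.sum_add_distrib]
    apply Finset.sum_congr rfl
    intro r hr
    have h3 : 2 * N = N + N := by omega
    simp only [hfdef, ← h3]
    rw [sin1 j r, sin2 j r]
    ring
  -- nonnegativity of sines for r < N
  have hsin_nonneg : ∀ r ∈ Finset.range N, 0 ≤ Real.sin (Real.pi * ((r : ℝ) + 1) / N) := by
    intro r hr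
    rw [Finset.mem_range] at hr
    apply Real.sin_nonneg_of_nonneg_of_le_pi
    · positivity
    · rw [div_le_iff₀ (by positivity)]
      have h : (r : ℝ) + 1 ≤ N := by exact_mod_cast hr
      exact mul_le_mul_of_nonneg_left h Real.pi_pos.le
  have hS_nonneg : ∀ j, 0 ≤ S j := by
    intro j
    apply Finset.sum_nonneg
    intro r hr
    apply mul_nonneg _ (hsin_nonneg r hr)
    have : j * (2 * N) + r < j * (2 * N) + (N + r) := by omega
    linarith [hanti this]
  have hS0 : 0 < S 0 := by
    apply Finset.sum_pos'
    · intro r hr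
      apply mul_nonneg _ (hsin_nonneg r hr)
      have : 0 * (2 * N) + r < 0 * (2 * N) + (N + r) := by omega
      linarith [hanti this]
    · refine ⟨0, Finset.mem_range.mpr (by omega), ?_⟩
      apply mul_pos
      · have : 0 * (2 * N) + 0 < 0 * (2 * N) + (N + 0) := by omega
        linarith [hanti this]
      · apply Real.sin_pos_of_pos_of_lt_pi
        · have : (0:ℝ) < Real.pi := Real.pi_pos
          positivity
        · rw [div_lt_iff₀ (by positivity)]
          have h2 : (2:ℝ) ≤ N := by exact_mod_cast hN
          have h3 : (1:ℝ) * Real.pi < (N:ℝ) * Real.pi := by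
            apply mul_lt_mul_of_pos_right _ Real.pi_pos
            linarith
          push_cast
          linarith
  have hS : Summable S :=
    hfe.prod.congr fun j => by
      rw [tsum_fintype]; exact key j
  have main : (∑' k, f k) = ∑' j, S j := by
    rw [← e.tsum_eq f, Summable.tsum_prod hfe]
    exact tsum_congr fun j => by rw [tsum_fintype]; exact key j
  show 0 < ∑' k, f k
  rw [main]
  exact Summable.tsum_pos hS hS_nonneg 0 hS0
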